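/- Under the hypotheses: X a real vector space, {ρ_λ : λ ∈ Λ} a pointwise bounded family of seminorms inducing Hausdorff topology τ', ‖x‖ := sup_λ ρ_λ(x) a norm inducing τ, and the unit ball X¹ τ'-compact — if additionally Λ is countable, then (X, γ[τ,τ']) is a sequential space. -/

import Mathlib

open Pointwise Topology Filter

/-- The basic "mixed" neighbourhoods of `0`: `⋃ n, ∑_{i=1}^n (U'_i ∩ i·U)`. -/
def mixBall {X : Type*} [AddCommGroup X] [Module ℝ X] (U' : ℕ → Set X) (U : Set X) : Set X :=
  ⋃ n : ℕ, ∑ i ∈ Finset.range n, (U' (i + 1) ∩ (((i : ℝ) + 1) • U))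

/-- The mixed topology `γ[t, t']` of Wiweger: the topology whose neighbourhoods of a point `x`
are generated by the translates `x + mixBall U' U`, where `U'` is a sequence of
`t'`-neighbourhoods of `0` and `U` is a `t`-neighbourhood of `0`. -/
def mixedTopology {X : Type*} [AddCommGroup X] [Module ℝ X]
    (t t' : TopologicalSpace X) : TopologicalSpace X :=
  TopologicalSpace.generateFrom
    {V | ∀ x ∈ V, ∃ (U' : ℕ → Set X) (U : Set X),
      (∀ n, U' n ∈ @nhds X t' 0) ∧ U ∈ @nhds X t 0 ∧
      ∀ y ∈ mixBall U' U, x + y ∈ V}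

/-- Helper: membership from neighbourhood membership, with explicit topology. -/
lemma mixMemOfNhds {α : Type*} (τ : TopologicalSpace α) {s : Set α} {a : α}
    (h : s ∈ @nhds α τ a) : a ∈ s := by
  letI := τ
  exact mem_of_mem_nhds h

/-- Scaling of closed unit balls of a seminorm. -/
lemma mixSmulBall {X : Type*} [AddCommGroup X] [Module ℝ X] (q : Seminorm ℝ X)
    {c : ℝ} (hc : 0 < c) : c • {x : X | q x ≤ 1} = {x : X | q x ≤ c} := by
  ext x
  rw [Set.mem_smul_set_iff_inv_smul_mem₀ hc.ne']
  simp only [Set.mem_setOf_eq, map_smul_eq_mul, norm_inv, Real.norm_eq_abs, abs_of_pos hc]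
  rw [inv_mul_le_iff₀ hc, mul_one]

/-- The separation lemma: if `A` meets every closed `q`-ball in a closed set, `q`-balls are
compact, and `0 ∉ A`, then some mixed ball avoids `A`. -/
lemma mixSep {X : Type*} [AddCommGroup X] [Module ℝ X] [TopologicalSpace X]
    [IsTopologicalAddGroup X] (q : Seminorm ℝ X)
    (hcpt : ∀ r : ℝ, 0 < r → IsCompact {x : X | q x ≤ r})
    (hql : ∀ r : ℝ, IsClosed {x : X | q x ≤ r})
    (A : Set X) (hA : ∀ n : ℕ, IsClosed (A ∩ {x | q x ≤ (n : ℝ)}))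
    (h0 : (0 : X) ∉ A) :
    ∃ U' : ℕ → Set X, (∀ n, U' n ∈ 𝓝 (0 : X)) ∧
      ∀ y ∈ mixBall U' {x : X | q x ≤ 1}, y ∉ A := by
  classical
  have hAr : ∀ r : ℝ, IsClosed (A ∩ {x | q x ≤ r}) := by
    intro r
    have h1 : A ∩ {x | q x ≤ r} = (A ∩ {x | q x ≤ (⌈max r 0⌉₊ : ℝ)}) ∩ {x | q x ≤ r} := by
      ext x
      constructor
      · rintro ⟨hxA, hxr⟩
        refine ⟨⟨hxA, ?_⟩, hxr⟩
        exact le_trans hxr ((le_max_left r 0).trans (Nat.le_ceil (max r 0)))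
      · rintro ⟨⟨hxA, _⟩, hxr⟩
        exact ⟨hxA, hxr⟩
    rw [h1]
    exact (hA _).inter (hql r)
  have step : ∀ (K : Set X) (r : ℝ) (m : ℕ), IsCompact K → K ⊆ {x | q x ≤ r} →
      Disjoint K A → ∃ C : Set X, C ∈ 𝓝 (0 : X) ∧
        IsCompact (K + (C ∩ {x | q x ≤ ((m : ℝ) + 1)})) ∧
        (K + (C ∩ {x | q x ≤ ((m : ℝ) + 1)})) ⊆ {x | q x ≤ r + ((m : ℝ) + 1)} ∧
        Disjoint (K + (C ∩ {x | q x ≤ ((m : ℝ) + 1)})) A := by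
    intro K r m hK hKr hKA
    have hG : IsOpen (A ∩ {x | q x ≤ r + ((m : ℝ) + 1)})ᶜ := (hAr _).isOpen_compl
    have hKG : K ⊆ (A ∩ {x | q x ≤ r + ((m : ℝ) + 1)})ᶜ := fun x hx hxmem =>
      Set.disjoint_left.mp hKA hx hxmem.1
    obtain ⟨V, hV, hKV⟩ := compact_open_separated_add_right hK hG hKG
    obtain ⟨C, hCmem, hCcl, hCV⟩ := exists_mem_nhds_isClosed_subset hV
    have hsub : (K + (C ∩ {x | q x ≤ ((m : ℝ) + 1)})) ⊆ {x | q x ≤ r + ((m : ℝ) + 1)} := by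
      rw [Set.add_subset_iff]
      intro a ha b hb
      have : q (a + b) ≤ q a + q b := map_add_le_add q a b
      have h1 : q a ≤ r := hKr ha
      have h2 : q b ≤ (m : ℝ) + 1 := hb.2
      simp only [Set.mem_setOf_eq]
      linarith
    refine ⟨C, hCmem, ?_, hsub, ?_⟩
    · exact hK.add ((hcpt _ (by positivity)).inter_left hCcl)
    · rw [Set.disjoint_left]
      intro z hz hzA
      have hzV : z ∈ K + V :=
        Set.add_subset_add (subset_refl K) ((Set.inter_subset_left).trans hCV) hz
      exact hKV hzV ⟨hzA, hsub hz⟩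
  choose! C hCmem hCcpt hCsub hCdis using step
  set F : ℕ → Set X × ℝ := fun n => Nat.rec ({0}, 1)
    (fun n p => (p.1 + (C p.1 p.2 n ∩ {x | q x ≤ ((n : ℝ) + 1)}), p.2 + ((n : ℝ) + 1))) n with hF
  have inv : ∀ n, IsCompact (F n).1 ∧ (F n).1 ⊆ {x | q x ≤ (F n).2} ∧ Disjoint (F n).1 A := by
    intro n
    induction n with
    | zero =>
        refine ⟨isCompact_singleton, ?_, ?_⟩
        · intro x hx
          have hx0 : x ∈ ({(0 : X)} : Set X) := hx
          rw [Set.mem_singleton_iff] at hx0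
          subst hx0
          show q 0 ≤ (1 : ℝ)
          rw [map_zero]
          norm_num
        · show Disjoint ({(0 : X)} : Set X) A
          exact Set.disjoint_singleton_left.mpr h0
    | succ n ih =>
        obtain ⟨h1, h2, h3⟩ := ih
        exact ⟨hCcpt _ _ n h1 h2 h3, hCsub _ _ n h1 h2 h3, hCdis _ _ n h1 h2 h3⟩
  set U' : ℕ → Set X := fun n => Nat.casesOn n Set.univ (fun m => C (F m).1 (F m).2 m) with hU'
  have hU'mem : ∀ n, U' n ∈ 𝓝 (0 : X) := by
    intro n
    cases n with
    | zero => exact Filter.univ_mem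
    | succ m => exact hCmem _ _ m (inv m).1 (inv m).2.1 (inv m).2.2
  have hsum : ∀ n, (∑ i ∈ Finset.range n, (U' (i + 1) ∩ (((i : ℝ) + 1) • {x : X | q x ≤ 1})))
      ⊆ (F n).1 := by
    intro n
    induction n with
    | zero =>
        intro x hx
        rw [Finset.range_zero, Finset.sum_empty] at hx
        rw [Set.mem_zero] at hx
        subst hx
        exact Set.mem_singleton _
    | succ n ih =>
        rw [Finset.sum_range_succ]
        have : U' (n + 1) ∩ (((n : ℝ) + 1) • {x : X | q x ≤ 1})
            = C (F n).1 (F n).2 n ∩ {x | q x ≤ ((n : ℝ) + 1)} := by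
          rw [mixSmulBall q (by positivity)]
        rw [this]
        exact Set.add_subset_add ih (subset_refl _)
  refine ⟨U', hU'mem, ?_⟩
  intro y hy hyA
  obtain ⟨n, hn⟩ := Set.mem_iUnion.mp hy
  exact Set.disjoint_left.mp (inv n).2.2 (hsum n hn) hyA

/-- Norm-bounded `t'`-convergent sequences converge in the mixed topology. -/
lemma mixConv {X : Type*} [AddCommGroup X] [Module ℝ X]
    (t t' : TopologicalSpace X) (q : Seminorm ℝ X)
    (ht : ∀ U ∈ @nhds X t 0, ∃ ε : ℝ, 0 < ε ∧ {x | q x < ε} ⊆ U)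
    (z : ℕ → X) (y : X) (R : ℝ) (hR : ∀ k, q (z k - y) ≤ R)
    (hconv : ∀ W ∈ @nhds X t' 0, ∀ᶠ k in Filter.atTop, z k - y ∈ W) :
    Filter.Tendsto z Filter.atTop (@nhds X (mixedTopology t t') y) := by
  classical
  letI γ : TopologicalSpace X := mixedTopology t t'
  rw [tendsto_nhds]
  intro s hs
  have hs' : TopologicalSpace.GenerateOpen
      {V : Set X | ∀ x ∈ V, ∃ (U' : ℕ → Set X) (U : Set X),
        (∀ n, U' n ∈ @nhds X t' 0) ∧ U ∈ @nhds X t 0 ∧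
        ∀ y ∈ mixBall U' U, x + y ∈ V} s := hs
  clear hs
  induction hs' with
  | basic V hV =>
      intro hyV
      obtain ⟨U', U, hU', hU, hsub⟩ := hV y hyV
      obtain ⟨ε, hε, hball⟩ := ht U hU
      obtain ⟨i, hi⟩ := exists_nat_gt (R / ε)
      have hc : (0 : ℝ) < (i : ℝ) + 1 := by positivity
      have hRc : R < ((i : ℝ) + 1) * ε := by
        have h1 : R / ε < (i : ℝ) + 1 := hi.trans (lt_add_one _)
        calc R = R / ε * ε := by field_simp
          _ < ((i : ℝ) + 1) * ε := by
              exact mul_lt_mul_of_pos_right h1 hε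
      have hwU : ∀ k, z k - y ∈ ((i : ℝ) + 1) • U := by
        intro k
        rw [Set.mem_smul_set_iff_inv_smul_mem₀ hc.ne']
        apply hball
        show q ((((i : ℝ) + 1))⁻¹ • (z k - y)) < ε
        rw [map_smul_eq_mul, norm_inv, Real.norm_eq_abs, abs_of_pos hc]
        calc (((i : ℝ) + 1))⁻¹ * q (z k - y) ≤ (((i : ℝ) + 1))⁻¹ * R :=
              mul_le_mul_of_nonneg_left (hR k) (by positivity)
          _ < ε := by
              rw [inv_mul_lt_iff₀ hc]
              linarith
      have hU'i := hconv (U' (i + 1)) (hU' (i + 1))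
      refine Filter.mem_of_superset hU'i ?_
      intro k hk
      have hg : ∀ j ∈ Finset.range (i + 1),
          (if j = i then z k - y else 0) ∈ U' (j + 1) ∩ (((j : ℝ) + 1) • U) := by
        intro j hj
        by_cases h : j = i
        · subst h
          simp only [if_pos rfl]
          exact ⟨hk, hwU k⟩
        · simp only [if_neg h]
          refine ⟨mixMemOfNhds t' (hU' (j + 1)), ?_⟩
          exact ⟨0, mixMemOfNhds t hU, smul_zero _⟩
      have hmemsum := Set.finset_sum_mem_finset_sum (Finset.range (i + 1)) _
        (fun j => if j = i then z k - y else 0) hg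
      rw [Finset.sum_ite_eq' (Finset.range (i + 1)) i (fun _ => z k - y),
        if_pos (Finset.self_mem_range_succ i)] at hmemsum
      have hmix : z k - y ∈ mixBall U' U := Set.mem_iUnion.mpr ⟨i + 1, hmemsum⟩
      have := hsub _ hmix
      have heq : y + (z k - y) = z k := by abel
      rwa [heq] at this
  | univ =>
      intro _
      exact Filter.univ_mem' (fun k => Set.mem_univ _)
  | inter s₁ s₂ h₁ h₂ ih₁ ih₂ =>
      intro hy
      rw [Set.preimage_inter]
      exact Filter.inter_mem (ih₁ hy.1) (ih₂ hy.2)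
  | sUnion S hS ih =>
      intro hy
      obtain ⟨u, huS, hyu⟩ := hy
      exact Filter.mem_of_superset (ih u huS hyu)
        (Set.preimage_mono (Set.subset_sUnion_of_mem huS))

/-- Basic facts about the norm topology induced by a single seminorm. -/
lemma mixNormBasis {X : Type*} [AddCommGroup X] [Module ℝ X] (q : Seminorm ℝ X) :
    (∀ U ∈ @nhds X (SeminormFamily.moduleFilterBasis (fun _ : Unit => q)).topology 0,
      ∃ ε : ℝ, 0 < ε ∧ {x | q x < ε} ⊆ U) ∧
    {x : X | q x ≤ 1} ∈ @nhds X (SeminormFamily.moduleFilterBasis (fun _ : Unit => q)).topology 0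
    := by
  letI t : TopologicalSpace X := (SeminormFamily.moduleFilterBasis (fun _ : Unit => q)).topology
  haveI hp : WithSeminorms (fun _ : Unit => q) := ⟨rfl⟩
  have hb := hp.hasBasis
  constructor
  · intro U hU
    obtain ⟨V, hV, hVU⟩ := hb.mem_iff.mp hU
    obtain ⟨s, r, hr, rfl⟩ := (SeminormFamily.basisSets_iff _).mp hV
    refine ⟨r, hr, fun x hx => hVU ?_⟩
    have hle : (s.sup (fun _ : Unit => q)) ≤ q := Finset.sup_le (fun _ _ => le_rfl)
    exact (Seminorm.mem_ball_zero _).mpr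
      (lt_of_le_of_lt (Seminorm.coe_le_coe.mpr hle x) hx)
  · refine hb.mem_iff.mpr ⟨Seminorm.ball q 0 1, ?_, ?_⟩
    · exact SeminormFamily.basisSets_singleton_mem _ () one_pos
    · intro x hx
      exact le_of_lt ((Seminorm.mem_ball_zero _).mp hx)

/-- Under the hypotheses of the previous theorem, if moreover the index set `Λ` is countable,
then the mixed topology `γ[τ,τ']` is sequential. -/
theorem stmt12 {X : Type*} [AddCommGroup X] [Module ℝ X]
    {Λ : Type*} [Nonempty Λ] [Countable Λ] (ρ : SeminormFamily ℝ X Λ)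
    (hbdd : ∀ x : X, BddAbove (Set.range fun l => ρ l x))
    (hsep : ∀ x : X, (∀ l, ρ l x = 0) → x = 0)
    (hcpt : @IsCompact X ρ.moduleFilterBasis.topology {x : X | ∀ l, ρ l x ≤ 1}) :
    @SequentialSpace X (mixedTopology
      (SeminormFamily.moduleFilterBasis (fun _ : Unit => (⨆ l, ρ l : Seminorm ℝ X))).topology
      ρ.moduleFilterBasis.topology) := by
  classical
  set q : Seminorm ℝ X := ⨆ l, ρ l with hqdef
  set t : TopologicalSpace X := (SeminormFamily.moduleFilterBasis (fun _ : Unit => q)).topology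
    with htdef
  letI t' : TopologicalSpace X := ρ.moduleFilterBasis.topology
  haveI hts : WithSeminorms ρ := ⟨rfl⟩
  haveI := hts.topologicalAddGroup
  haveI := hts.continuousSMul
  haveI := hts.firstCountableTopology
  -- basic seminorm facts
  have hb : BddAbove (Set.range ρ) := Seminorm.bddAbove_range_iff.mpr hbdd
  have hqx : ∀ x, q x = ⨆ l, ρ l x := fun x => Seminorm.iSup_apply hb
  have hball : ∀ r : ℝ, {x : X | q x ≤ r} = {x | ∀ l, ρ l x ≤ r} := by
    intro r
    ext x
    simp only [Set.mem_setOf_eq, hqx, ciSup_le_iff (hbdd x)]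
  have hclosed : ∀ r : ℝ, IsClosed {x : X | q x ≤ r} := by
    intro r
    rw [hball]
    have h2 : {x : X | ∀ l, ρ l x ≤ r} = ⋂ l, (ρ l) ⁻¹' Set.Iic r := by
      ext x; simp
    rw [h2]
    exact isClosed_iInter (fun l => (isClosed_Iic).preimage (hts.continuous_seminorm l))
  have hcpt' : ∀ r : ℝ, 0 < r → IsCompact {x : X | q x ≤ r} := by
    intro r hr
    have h1 : IsCompact {x : X | q x ≤ 1} := by
      rw [hball]
      exact hcpt
    have h2 : {x : X | q x ≤ r} = r • {x : X | q x ≤ 1} := (mixSmulBall q hr).symm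
    rw [h2]
    exact h1.smul r
  obtain ⟨htbasis, hU1⟩ := mixNormBasis (X := X) q
  -- the generating set of the mixed topology
  set S : Set (Set X) := {V : Set X | ∀ x ∈ V, ∃ (U' : ℕ → Set X) (U : Set X),
    (∀ n, U' n ∈ @nhds X t' 0) ∧ U ∈ @nhds X t 0 ∧
    ∀ y ∈ mixBall U' U, x + y ∈ V} with hSdef
  refine @SequentialSpace.mk X (mixedTopology t ρ.moduleFilterBasis.topology) fun A hA => ?_
  -- A is γ-sequentially closed; show each A ∩ ball is t'-closed
  have hAcl : ∀ n : ℕ, IsClosed (A ∩ {x | q x ≤ (n : ℝ)}) := by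
    intro n
    apply IsSeqClosed.isClosed
    intro z w hz hzw
    have hwball : w ∈ {x : X | q x ≤ (n : ℝ)} :=
      (hclosed (n : ℝ)).isSeqClosed (fun k => (hz k).2) hzw
    have hRbd : ∀ k, q (z k - w) ≤ (n : ℝ) + (n : ℝ) := by
      intro k
      have h1 : q (z k - w) ≤ q (z k) + q w := by
        rw [sub_eq_add_neg]
        exact (map_add_le_add q _ _).trans (by rw [map_neg_eq_map])
      have h2 : q (z k) ≤ (n : ℝ) := (hz k).2
      have h3 : q w ≤ (n : ℝ) := hwball
      linarith
    have hconv : ∀ W ∈ @nhds X t' 0, ∀ᶠ k in Filter.atTop, z k - w ∈ W := by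
      intro W hW
      have h4 : Filter.Tendsto (fun k => z k - w) Filter.atTop (𝓝 (w - w)) :=
        hzw.sub tendsto_const_nhds
      rw [sub_self] at h4
      exact h4 hW
    have hγconv := mixConv t t' q htbasis z w ((n : ℝ) + (n : ℝ)) hRbd hconv
    exact ⟨hA (fun k => (hz k).1) hγconv, hwball⟩
  have hAclR : ∀ r : ℝ, IsClosed (A ∩ {v : X | q v ≤ r}) := by
    intro r
    have h1 : A ∩ {v : X | q v ≤ r}
        = (A ∩ {v : X | q v ≤ (⌈max r 0⌉₊ : ℝ)}) ∩ {v : X | q v ≤ r} := by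
      ext v
      constructor
      · rintro ⟨hvA, hvr⟩
        refine ⟨⟨hvA, ?_⟩, hvr⟩
        exact le_trans hvr ((le_max_left r 0).trans (Nat.le_ceil (max r 0)))
      · rintro ⟨⟨hvA, _⟩, hvr⟩
        exact ⟨hvA, hvr⟩
    rw [h1]
    exact (hAcl _).inter (hclosed r)
  -- now show A is γ-closed
  refine @IsClosed.mk X (mixedTopology t ρ.moduleFilterBasis.topology) A ?_
  show @IsOpen X (TopologicalSpace.generateFrom S) Aᶜ
  apply TopologicalSpace.isOpen_generateFrom_of_mem
  intro x hx
  set A' : Set X := {y : X | x + y ∈ A} with hA'def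
  have h0' : (0 : X) ∉ A' := by
    simp only [hA'def, Set.mem_setOf_eq, add_zero]
    exact hx
  have hA'cl : ∀ n : ℕ, IsClosed (A' ∩ {y : X | q y ≤ (n : ℝ)}) := by
    intro n
    have hkey : A' ∩ {y : X | q y ≤ (n : ℝ)}
        = ((fun y => x + y) ⁻¹' (A ∩ {v : X | q v ≤ q x + (n : ℝ)})) ∩ {y : X | q y ≤ (n : ℝ)} := by
      ext y
      constructor
      · rintro ⟨hyA, hyn⟩
        have hyn' : q y ≤ (n : ℝ) := hyn
        refine ⟨⟨hyA, ?_⟩, hyn⟩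
        have := map_add_le_add q x y
        simp only [Set.mem_setOf_eq]
        linarith
      · rintro ⟨⟨h1, _⟩, h2⟩
        exact ⟨h1, h2⟩
    rw [hkey]
    exact ((hAclR _).preimage (continuous_const.add continuous_id)).inter (hclosed _)
  obtain ⟨U', hU'mem, hU'A⟩ := mixSep q hcpt' hclosed A' hA'cl h0'
  exact ⟨U', {v : X | q v ≤ 1}, hU'mem, hU1, fun yy hyy => hU'A yy hyy⟩
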